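/- Let p be a prime, m a positive integer, and p' a p-primitive divisor of p^m − 1. Let G = GL_{F_p}(F × F) be the group of F_p-linear bijections of F × F, and let S = {(x,y) ↦ (r·x, r·y) : r ∈ F^*} and S_R = {(x,y) ↦ (r·x, r·y) : r ∈ R} be subgroups of G. Then the normalizer of S_R in G equals the normalizer of S in G, and both equal the set of bijective maps of the form (x,y) ↦ (c₁·τ(x) + c₂·τ(y), c₃·τ(x) + c₄·τ(y)) where c₁, c₂, c₃, c₄ ∈ F and τ ranges over the Galois group Gal(F/F_p), i.e., τ(x) = x^{p^j} for some 0 ≤ j ≤ m−1. -/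

import Mathlib

open scoped Classical
noncomputable section

abbrev GF (p m : ℕ) [Fact p.Prime] := GaloisField p m

/-- The Taniguchi multiplication `T(q,α,a,b)` on `F × F` where `F = F_{p^m}`. -/
def taniMul (p m : ℕ) [Fact p.Prime] (q : ℕ) (α a b : GF p m) :
    GF p m × GF p m → GF p m × GF p m → GF p m × GF p m :=
  fun w z =>
    (w.1 ^ q * z.1 + α ^ q ^ 2 * w.1 * z.1 ^ q
       - a * (w.1 * z.2 ^ q - α ^ q * z.1 * w.2 ^ q)
       - b * (w.2 ^ q * z.2 + α * w.2 * z.2 ^ q),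
     w.1 * z.2 ^ q ^ 2 + w.2 ^ q ^ 2 * z.1)

/-- Two multiplications on `F × F` are isotopic if there are `F_p`-linear bijections
`N, L, M` with `N (w ∘₁ z) = L w ∘₂ M z` for all `w, z`. -/
def Isotopic (p m : ℕ) [Fact p.Prime]
    (mul1 mul2 : GF p m × GF p m → GF p m × GF p m → GF p m × GF p m) : Prop :=
  ∃ N L M : (GF p m × GF p m) ≃ₗ[ZMod p] GF p m × GF p m,
    ∀ w z, N (mul1 w z) = mul2 (L w) (M z)

/-- `p'` is a `p`-primitive divisor of `p^m - 1`. -/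
def IsPrimitiveDivisor (p m p' : ℕ) : Prop :=
  p'.Prime ∧ p' ∣ p ^ m - 1 ∧ ∀ j : ℕ, 1 ≤ j → j < m → ¬ p' ∣ p ^ j - 1

section AuxNormalizer

variable {p m : ℕ} [Fact p.Prime]

lemma gf_card (hm : m ≠ 0) : ∀ (_ : Fintype (GF p m)), Fintype.card (GF p m) = p ^ m := by
  intro _; rw [← Nat.card_eq_fintype_card]; exact GaloisField.card p m hm

lemma gf_pow_card (hm : m ≠ 0) (x : GF p m) : x ^ p ^ m = x := by
  have : Fintype (GF p m) := Fintype.ofFinite _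
  have h := gf_card (p := p) hm this
  exact h ▸ FiniteField.pow_card x

lemma not_forall_pow_eq (hm : m ≠ 0) {j : ℕ} (hj1 : 1 ≤ j) (hjm : j < m)
    (h : ∀ x : GF p m, x ^ p ^ j = x) : False := by
  have : Fintype (GF p m) := Fintype.ofFinite _
  obtain ⟨g, hg⟩ := IsCyclic.exists_generator (α := (GF p m)ˣ)
  have hcard : orderOf g = p ^ m - 1 := by
    rw [orderOf_eq_card_of_forall_mem_zpowers hg, Nat.card_units, GaloisField.card p m hm]
  have hp1 : 1 < p := (Fact.out : p.Prime).one_lt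
  have hpj : 1 < p ^ j := Nat.one_lt_pow (by omega) hp1
  have hgp : g ^ (p ^ j) = g := by
    apply Units.ext; push_cast; exact h g
  have hone : g ^ (p ^ j - 1) = 1 := by
    have h2 : g ^ (p ^ j - 1) * g = g := by
      rw [← pow_succ, Nat.sub_add_cancel (by omega)]; exact hgp
    exact mul_right_cancel (by rw [h2, one_mul])
  have hdvd : p ^ m - 1 ∣ p ^ j - 1 := hcard ▸ orderOf_dvd_of_pow_eq_one hone
  have hlt : p ^ j < p ^ m := Nat.pow_lt_pow_right hp1 hjm
  have := Nat.le_of_dvd (by omega) hdvd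
  omega

def frobAlg (p m : ℕ) [Fact p.Prime] : GF p m ≃ₐ[ZMod p] GF p m :=
  { RingEquiv.ofBijective (frobenius (GF p m) p)
      ((Finite.injective_iff_bijective).mp (frobenius_inj _ p)) with
    commutes' := fun c => by
      obtain ⟨n, rfl⟩ := ZMod.natCast_zmod_surjective (n := p) c
      show frobenius (GF p m) p ((algebraMap (ZMod p) (GF p m)) (n : ZMod p)) = _
      rw [map_natCast, map_natCast] }

lemma frobAlg_apply (x : GF p m) : frobAlg p m x = x ^ p := rfl

lemma frobAlg_pow_apply (j : ℕ) : ∀ x : GF p m, (frobAlg p m ^ j) x = x ^ p ^ j := by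
  induction j with
  | zero => intro x; simp
  | succ n ih =>
    intro x
    rw [pow_succ, AlgEquiv.mul_apply, frobAlg_apply, ih (x ^ p), ← pow_mul, ← pow_succ']

lemma ringEquiv_classify (hm : m ≠ 0) (σ : GF p m ≃+* GF p m) :
    ∃ j : ℕ, ∀ x, σ x = x ^ p ^ j := by
  have : Fintype (GF p m) := Fintype.ofFinite _
  have hcomm : ∀ c : ZMod p, σ ((algebraMap (ZMod p) (GF p m)) c) =
      (algebraMap (ZMod p) (GF p m)) c := by
    intro c
    obtain ⟨n, rfl⟩ := ZMod.natCast_zmod_surjective (n := p) c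
    rw [map_natCast, map_natCast σ]
  let σa : GF p m ≃ₐ[ZMod p] GF p m := { σ with commutes' := hcomm }
  have hfinrank : Module.finrank (ZMod p) (GF p m) = m := by
    have h1 : Fintype.card (GF p m) = p ^ Module.finrank (ZMod p) (GF p m) := by
      have := Module.card_eq_pow_finrank (K := ZMod p) (V := GF p m)
      rwa [ZMod.card] at this
    have h2 := gf_card (p := p) hm ‹_›
    exact (Nat.pow_right_injective (Fact.out : p.Prime).two_le (h1.symm.trans h2))
  have hcardaut : Fintype.card (GF p m ≃ₐ[ZMod p] GF p m) = m := by
    rw [← Nat.card_eq_fintype_card, IsGalois.card_aut_eq_finrank, hfinrank]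
  have hordf : orderOf (frobAlg p m) = m := by
    have hfm : frobAlg p m ^ m = 1 := by
      ext x
      rw [frobAlg_pow_apply]
      exact gf_pow_card hm x
    have hd : orderOf (frobAlg p m) ∣ m := orderOf_dvd_of_pow_eq_one hfm
    have hpos : 0 < orderOf (frobAlg p m) := orderOf_pos _
    rcases Nat.lt_or_ge (orderOf (frobAlg p m)) m with hlt | hge
    · exfalso
      apply not_forall_pow_eq (p := p) (m := m) hm hpos hlt
      intro x
      rw [← frobAlg_pow_apply, pow_orderOf_eq_one, AlgEquiv.one_apply]
    · exact Nat.le_antisymm (Nat.le_of_dvd (by omega) hd) hge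
  have htop : Subgroup.zpowers (frobAlg p m) = ⊤ := by
    apply Subgroup.eq_top_of_card_eq
    rw [Nat.card_zpowers, hordf, Nat.card_eq_fintype_card, hcardaut]
  have hmem : σa ∈ Subgroup.zpowers (frobAlg p m) := htop ▸ Subgroup.mem_top σa
  obtain ⟨j, hj⟩ := mem_powers_iff_mem_zpowers.mpr hmem
  exact ⟨j, fun x => by rw [show σ x = σa x from rfl, ← hj, frobAlg_pow_apply]⟩


abbrev Gm (p m : ℕ) [Fact p.Prime] := (GF p m × GF p m) ≃ₗ[ZMod p] GF p m × GF p m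

/-- The subfield of scalars over which `e` is semilinear. -/
def semiField (e : Gm p m) : Subfield (GF p m) where
  carrier := {a | ∃ b : GF p m, ∀ w : GF p m × GF p m, e (a • w) = b • e w}
  zero_mem' := ⟨0, fun w => by simp⟩
  one_mem' := ⟨1, fun w => by simp⟩
  add_mem' := fun {a a'} ha ha' => by
    obtain ⟨b, hb⟩ := ha; obtain ⟨b', hb'⟩ := ha'
    exact ⟨b + b', fun w => by rw [add_smul, map_add, hb, hb', add_smul]⟩
  mul_mem' := fun {a a'} ha ha' => by
    obtain ⟨b, hb⟩ := ha; obtain ⟨b', hb'⟩ := ha'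
    exact ⟨b * b', fun w => by rw [mul_smul, hb, hb', mul_smul]⟩
  neg_mem' := fun {a} ha => by
    obtain ⟨b, hb⟩ := ha
    exact ⟨-b, fun w => by rw [neg_smul, map_neg, hb, neg_smul]⟩
  inv_mem' := by
    intro a ha
    obtain ⟨b, hb⟩ := ha
    rcases eq_or_ne a 0 with rfl | ha0
    · exact ⟨0, fun w => by simp⟩
    have hb0 : b ≠ 0 := by
      intro rfl'
      subst rfl'
      have := hb ((1 : GF p m), (0 : GF p m))
      simp only [zero_smul] at this
      have h2 : a • ((1 : GF p m), (0 : GF p m)) = 0 := by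
        apply e.injective; rw [this, map_zero]
      have : a * 1 = 0 := congrArg Prod.fst h2
      simp at this
      exact ha0 this
    refine ⟨b⁻¹, fun w => ?_⟩
    have h3 := hb (a⁻¹ • w)
    rw [smul_smul, mul_inv_cancel₀ ha0, one_smul] at h3
    rw [eq_inv_smul_iff₀ hb0]
    exact h3.symm

lemma semiField_eq_top {p' : ℕ} (hm : m ≠ 0) (hp'p : p'.Prime)
    (hmin : ∀ j : ℕ, 1 ≤ j → j < m → ¬ p' ∣ p ^ j - 1)
    (e : Gm p m) (r₀ : GF p m) (hr₀ : orderOf r₀ = p') (hmem : r₀ ∈ semiField e) :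
    semiField e = ⊤ := by
  set A := semiField e with hA
  haveI : Fintype (GF p m) := Fintype.ofFinite _
  haveI : Fintype A := Fintype.ofFinite _
  haveI : CharP A p := RingHom.charP A.subtype Subtype.val_injective p
  obtain ⟨n, -, hcardA⟩ := FiniteField.card A p
  -- order of r₀ inside A
  have hr0ne : r₀ ≠ 0 := by
    have hpow : r₀ ^ p' = 1 := hr₀ ▸ pow_orderOf_eq_one r₀
    intro h
    rw [h, zero_pow hp'p.ne_zero] at hpow
    exact zero_ne_one hpow
  set x₀ : A := ⟨r₀, hmem⟩ with hx₀
  have hordx : orderOf x₀ = p' := by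
    rw [← hr₀]
    exact (orderOf_injective A.subtype.toMonoidHom Subtype.val_injective x₀).symm
  have hx0ne : x₀ ≠ 0 := by
    intro h
    apply hr0ne
    exact congrArg Subtype.val h
  have hdvd : p' ∣ p ^ (n : ℕ) - 1 := by
    have h1 : orderOf (Units.mk0 x₀ hx0ne) = p' := by
      rw [← orderOf_units, Units.val_mk0, hordx]
    have h2 : orderOf (Units.mk0 x₀ hx0ne) ∣ Fintype.card Aˣ := orderOf_dvd_card
    rw [h1, Fintype.card_units, hcardA] at h2
    exact h2
  have hnm : (n : ℕ) ≤ m := by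
    have hle : Fintype.card A ≤ Fintype.card (GF p m) :=
      Fintype.card_le_of_injective _ Subtype.val_injective
    rw [hcardA, show Fintype.card (GF p m) = p ^ m by
      rw [← Nat.card_eq_fintype_card]; exact GaloisField.card p m hm] at hle
    exact (Nat.pow_le_pow_iff_right (Fact.out : p.Prime).one_lt).mp hle
  have hmn : (n : ℕ) = m := by
    rcases Nat.lt_or_ge (n : ℕ) m with h | h
    · exact absurd hdvd (hmin n n.2 h)
    · omega
  -- cardinalities agree, so A = ⊤
  have hcards : Fintype.card A = Fintype.card (GF p m) := by
    rw [hcardA, hmn, ← Nat.card_eq_fintype_card, GaloisField.card p m hm]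
  have hsurj : Function.Surjective (Subtype.val : A → GF p m) :=
    ((Fintype.bijective_iff_injective_and_card _).mpr ⟨Subtype.val_injective, hcards⟩).2
  ext x
  simp only [Subfield.mem_top, iff_true]
  obtain ⟨y, rfl⟩ := hsurj x
  exact y.2

lemma smul_cancel_of_all (e : Gm p m) {b b' : GF p m}
    (h : ∀ w, b • e w = b' • e w) : b = b' := by
  have h1 := h (e.symm ((1 : GF p m), (0 : GF p m)))
  rw [e.apply_symm_apply] at h1
  have := congrArg Prod.fst h1
  simpa using this

lemma exists_ringEquiv_semilinear (e : Gm p m) (htop : semiField e = ⊤) :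
    ∃ σ : GF p m ≃+* GF p m, ∀ (a : GF p m) (w : GF p m × GF p m),
      e (a • w) = σ a • e w := by
  have hall : ∀ a : GF p m, ∃ b : GF p m, ∀ w, e (a • w) = b • e w := by
    intro a
    have : a ∈ semiField e := by rw [htop]; exact Subfield.mem_top a
    exact this
  choose σf hσf using hall
  have huniq : ∀ (a b : GF p m), (∀ w, e (a • w) = b • e w) → σf a = b := by
    intro a b hb
    exact smul_cancel_of_all e (fun w => by rw [← hσf a w, hb w])
  have hone : σf 1 = 1 := huniq 1 1 (fun w => by simp)
  have hzero : σf 0 = 0 := huniq 0 0 (fun w => by simp)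
  have hmul : ∀ a a', σf (a * a') = σf a * σf a' := fun a a' =>
    huniq _ _ (fun w => by rw [mul_smul, hσf, hσf, mul_smul])
  have hadd : ∀ a a', σf (a + a') = σf a + σf a' := fun a a' =>
    huniq _ _ (fun w => by rw [add_smul, map_add, hσf, hσf, add_smul])
  let σR : GF p m →+* GF p m :=
    { toFun := σf, map_one' := hone, map_mul' := hmul, map_zero' := hzero, map_add' := hadd }
  have hbij : Function.Bijective σR :=
    (Finite.injective_iff_bijective).mp σR.injective
  exact ⟨RingEquiv.ofBijective σR hbij, fun a w => hσf a w⟩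

/-- inverse semilinearity -/
lemma symm_semilinear (e : Gm p m) (σ : GF p m ≃+* GF p m)
    (hσ : ∀ (a : GF p m) (w : GF p m × GF p m), e (a • w) = σ a • e w)
    (b : GF p m) (v : GF p m × GF p m) : e.symm (b • v) = σ.symm b • e.symm v := by
  apply e.injective
  rw [e.apply_symm_apply, hσ, RingEquiv.apply_symm_apply, e.apply_symm_apply]

lemma mem_NS_of_semilinear (e : Gm p m) (σ : GF p m ≃+* GF p m)
    (hσ : ∀ (a : GF p m) (w : GF p m × GF p m), e (a • w) = σ a • e w) :
    e ∈ Subgroup.setNormalizer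
      {f : Gm p m | ∃ r : GF p m, r ≠ 0 ∧ ∀ w : GF p m × GF p m, f w = (r * w.1, r * w.2)} := by
  intro n
  constructor
  · rintro ⟨r, hr0, hn⟩
    refine ⟨σ r, fun h => hr0 (σ.injective (by rw [h, map_zero])), fun w => ?_⟩
    show e (n (e.symm w)) = _
    rw [hn, show ((r * (e.symm w).1, r * (e.symm w).2) : GF p m × GF p m) = r • e.symm w from rfl,
      hσ, e.apply_symm_apply]
    rfl
  · rintro ⟨t, ht0, hn⟩
    refine ⟨σ.symm t, fun h => ht0 (by simpa using congrArg σ h), fun w => ?_⟩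
    have h1 : ∀ v, e (n (e.symm v)) = t • v := fun v => hn v
    have h2 := h1 (e w)
    rw [e.symm_apply_apply] at h2
    have h3 : n w = e.symm (t • e w) := by rw [← h2, e.symm_apply_apply]
    rw [h3, symm_semilinear e σ hσ, e.symm_apply_apply]
    rfl

def scalE (r : (GF p m)ˣ) : Gm p m where
  toFun w := (r : GF p m) • w
  invFun w := ((r⁻¹ : (GF p m)ˣ) : GF p m) • w
  map_add' u v := smul_add _ u v
  map_smul' c w := smul_comm _ c w
  left_inv w := by simp [smul_smul]
  right_inv w := by simp [smul_smul]

lemma scalE_apply (r : (GF p m)ˣ) (w : GF p m × GF p m) : scalE r w = (r : GF p m) • w := rfl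

def scalHom : (GF p m)ˣ →* Gm p m where
  toFun := scalE
  map_one' := by ext w <;> simp [scalE]
  map_mul' u v := by
    ext w <;> simp [scalE_apply, show ∀ (e f : Gm p m) (w), (e * f) w = e (f w) from fun _ _ _ => rfl, mul_smul]

lemma scalHom_inj : Function.Injective (scalHom : (GF p m)ˣ →* Gm p m) := by
  intro u v h
  have h2 := congrArg (fun e : Gm p m => (e ((1:GF p m),(0:GF p m))).1) h
  apply Units.ext
  simpa [scalHom, scalE_apply] using h2

lemma eq_scalHom {f : Gm p m} {r : GF p m} (hr : r ≠ 0)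
    (h : ∀ w : GF p m × GF p m, f w = (r * w.1, r * w.2)) :
    f = scalHom (Units.mk0 r hr) := by
  apply DFunLike.ext
  intro w
  rw [h w]
  rfl

lemma orderOf_of_scal {f : Gm p m} {r : GF p m} (hr : r ≠ 0)
    (h : ∀ w : GF p m × GF p m, f w = (r * w.1, r * w.2)) :
    orderOf f = orderOf r := by
  rw [eq_scalHom hr h, orderOf_injective scalHom scalHom_inj, ← orderOf_units, Units.val_mk0]

lemma mem_NSR_of_mem_NS {p' : ℕ} (e : Gm p m)
    (he : e ∈ Subgroup.setNormalizer
      {f : Gm p m | ∃ r : GF p m, r ≠ 0 ∧ ∀ w : GF p m × GF p m, f w = (r * w.1, r * w.2)}) :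
    e ∈ Subgroup.setNormalizer
      {f : Gm p m | ∃ r : GF p m, r ≠ 0 ∧ (∃ j : ℕ, orderOf r = p' ^ j) ∧
        ∀ w : GF p m × GF p m, f w = (r * w.1, r * w.2)} := by
  intro n
  have hconj : orderOf (e * n * e⁻¹) = orderOf n :=
    orderOf_injective (MulAut.conj e).toMonoidHom (MulAut.conj e).injective n
  constructor
  · rintro ⟨r, hr0, hord, hn⟩
    obtain ⟨t, ht0, ht⟩ := (he n).mp ⟨r, hr0, hn⟩
    refine ⟨t, ht0, ?_, ht⟩
    rw [← orderOf_of_scal ht0 ht, hconj, orderOf_of_scal hr0 hn]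
    exact hord
  · rintro ⟨t, ht0, hord, ht⟩
    obtain ⟨r, hr0, hn⟩ := (he n).mpr ⟨t, ht0, ht⟩
    refine ⟨r, hr0, ?_, hn⟩
    rw [← orderOf_of_scal hr0 hn, ← hconj, orderOf_of_scal ht0 ht]
    exact hord

lemma semilinear_of_mem_NSR {p' : ℕ} (hm : m ≠ 0) (hp'p : p'.Prime)
    (hdvd : p' ∣ p ^ m - 1) (hmin : ∀ j : ℕ, 1 ≤ j → j < m → ¬ p' ∣ p ^ j - 1)
    (e : Gm p m)
    (he : e ∈ Subgroup.setNormalizer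
      {f : Gm p m | ∃ r : GF p m, r ≠ 0 ∧ (∃ j : ℕ, orderOf r = p' ^ j) ∧
        ∀ w : GF p m × GF p m, f w = (r * w.1, r * w.2)}) :
    ∃ σ : GF p m ≃+* GF p m, ∀ (a : GF p m) (w : GF p m × GF p m),
      e (a • w) = σ a • e w := by
  haveI := Fact.mk hp'p
  haveI : Fintype (GF p m) := Fintype.ofFinite _
  have hcardu : Fintype.card (GF p m)ˣ = p ^ m - 1 := by
    rw [Fintype.card_units, ← Nat.card_eq_fintype_card, GaloisField.card p m hm]
  obtain ⟨u, hu⟩ := exists_prime_orderOf_dvd_card p' (by rw [hcardu]; exact hdvd)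
  have hordr : orderOf ((u : GF p m)) = p' := by rw [orderOf_units]; exact hu
  have hmem : scalHom u ∈
      {f : Gm p m | ∃ r : GF p m, r ≠ 0 ∧ (∃ j : ℕ, orderOf r = p' ^ j) ∧
        ∀ w : GF p m × GF p m, f w = (r * w.1, r * w.2)} :=
    ⟨(u : GF p m), u.ne_zero, ⟨1, by rw [pow_one, hordr]⟩, fun w => rfl⟩
  obtain ⟨t, ht0, -, ht⟩ := (he _).mp hmem
  have hr₀mem : (u : GF p m) ∈ semiField e := by
    refine ⟨t, fun v => ?_⟩
    have h1 := ht (e v)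
    have h2 : (e * scalHom u * e⁻¹) (e v) = e ((u : GF p m) • v) := by
      show e (scalHom u (e.symm (e v))) = _
      rw [e.symm_apply_apply]
      rfl
    rw [h2] at h1
    exact h1
  exact exists_ringEquiv_semilinear e (semiField_eq_top hm hp'p hmin e _ hordr hr₀mem)

lemma pow_pow_mul (hm : m ≠ 0) (x : GF p m) (q : ℕ) : x ^ p ^ (m * q) = x := by
  induction q with
  | zero => simp
  | succ n ih => rw [Nat.mul_succ, pow_add, pow_mul, ih, gf_pow_card hm]

lemma pow_pow_mod (hm : m ≠ 0) (x : GF p m) (k : ℕ) : x ^ p ^ k = x ^ p ^ (k % m) := by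
  conv_lhs => rw [← Nat.div_add_mod k m]
  rw [pow_add, pow_mul, pow_pow_mul hm]

lemma form_of_semilinear (hm : m ≠ 0) (e : Gm p m) (σ : GF p m ≃+* GF p m)
    (hσ : ∀ (a : GF p m) (w : GF p m × GF p m), e (a • w) = σ a • e w) :
    ∃ (c₁ c₂ c₃ c₄ : GF p m) (j : ℕ), j ≤ m - 1 ∧
      ∀ w : GF p m × GF p m,
        e w = (c₁ * w.1 ^ p ^ j + c₂ * w.2 ^ p ^ j,
               c₃ * w.1 ^ p ^ j + c₄ * w.2 ^ p ^ j) := by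
  obtain ⟨k, hk⟩ := ringEquiv_classify hm σ
  refine ⟨(e ((1:GF p m),(0:GF p m))).1, (e ((0:GF p m),(1:GF p m))).1,
    (e ((1:GF p m),(0:GF p m))).2, (e ((0:GF p m),(1:GF p m))).2, k % m, ?_, ?_⟩
  · have := Nat.mod_lt k (Nat.pos_of_ne_zero hm)
    omega
  · intro w
    have hw : w = w.1 • ((1:GF p m),(0:GF p m)) + w.2 • ((0:GF p m),(1:GF p m)) := by
      apply Prod.ext <;> simp
    conv_lhs => rw [hw]
    rw [map_add, hσ, hσ, hk, hk, pow_pow_mod hm w.1 k, pow_pow_mod hm w.2 k]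
    apply Prod.ext <;> simp [mul_comm] <;> try ring

lemma semilinear_of_form (e : Gm p m) (c₁ c₂ c₃ c₄ : GF p m) (j : ℕ)
    (hform : ∀ w : GF p m × GF p m,
        e w = (c₁ * w.1 ^ p ^ j + c₂ * w.2 ^ p ^ j,
               c₃ * w.1 ^ p ^ j + c₄ * w.2 ^ p ^ j)) :
    ∀ (a : GF p m) (w : GF p m × GF p m),
      e (a • w) = (frobAlg p m ^ j).toRingEquiv a • e w := by
  intro a w
  have hσa : (frobAlg p m ^ j).toRingEquiv a = a ^ p ^ j := frobAlg_pow_apply j a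
  rw [hσa, hform, hform]
  show (c₁ * (a * w.1) ^ p ^ j + c₂ * (a * w.2) ^ p ^ j,
        c₃ * (a * w.1) ^ p ^ j + c₄ * (a * w.2) ^ p ^ j) = _
  apply Prod.ext <;> simp [mul_pow] <;> ring


end AuxNormalizer

/-- Lemma 4(a): the normalizers of `S_R` and `S` in `GL_{F_p}(F × F)` coincide and
consist exactly of the bijective maps `(x,y) ↦ (c₁ τ(x) + c₂ τ(y), c₃ τ(x) + c₄ τ(y))`
with `τ : x ↦ x^{p^j}` a field automorphism. -/
theorem normalizer_S_R (p m p' : ℕ) [Fact p.Prime] (hm : 0 < m)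
    (hp' : IsPrimitiveDivisor p m p') :
    let S : Set ((GF p m × GF p m) ≃ₗ[ZMod p] GF p m × GF p m) :=
      {e | ∃ r : GF p m, r ≠ 0 ∧ ∀ w : GF p m × GF p m, e w = (r * w.1, r * w.2)}
    let S_R : Set ((GF p m × GF p m) ≃ₗ[ZMod p] GF p m × GF p m) :=
      {e | ∃ r : GF p m, r ≠ 0 ∧ (∃ j : ℕ, orderOf r = p' ^ j) ∧
        ∀ w : GF p m × GF p m, e w = (r * w.1, r * w.2)}
    Subgroup.setNormalizer S_R = Subgroup.setNormalizer S ∧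
      (Subgroup.setNormalizer S : Set ((GF p m × GF p m) ≃ₗ[ZMod p] GF p m × GF p m)) =
        {e | ∃ (c₁ c₂ c₃ c₄ : GF p m) (j : ℕ), j ≤ m - 1 ∧
          ∀ w : GF p m × GF p m,
            e w = (c₁ * w.1 ^ p ^ j + c₂ * w.2 ^ p ^ j,
                   c₃ * w.1 ^ p ^ j + c₄ * w.2 ^ p ^ j)} := by
  intro S S_R
  obtain ⟨hp'p, hdvd, hmin⟩ := hp'
  have hm' : m ≠ 0 := hm.ne'
  have key1 : ∀ e : Gm p m, e ∈ Subgroup.setNormalizer S_R →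
      ∃ (c₁ c₂ c₃ c₄ : GF p m) (j : ℕ), j ≤ m - 1 ∧
        ∀ w : GF p m × GF p m,
          e w = (c₁ * w.1 ^ p ^ j + c₂ * w.2 ^ p ^ j,
                 c₃ * w.1 ^ p ^ j + c₄ * w.2 ^ p ^ j) := by
    intro e he
    obtain ⟨σ, hσ⟩ := semilinear_of_mem_NSR hm' hp'p hdvd hmin e he
    exact form_of_semilinear hm' e σ hσ
  have key2 : ∀ e : Gm p m,
      (∃ (c₁ c₂ c₃ c₄ : GF p m) (j : ℕ), j ≤ m - 1 ∧
        ∀ w : GF p m × GF p m,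
          e w = (c₁ * w.1 ^ p ^ j + c₂ * w.2 ^ p ^ j,
                 c₃ * w.1 ^ p ^ j + c₄ * w.2 ^ p ^ j)) →
      e ∈ Subgroup.setNormalizer S := by
    rintro e ⟨c₁, c₂, c₃, c₄, j, hj, hf⟩
    exact mem_NS_of_semilinear e _ (semilinear_of_form e c₁ c₂ c₃ c₄ j hf)
  have key3 : ∀ e : Gm p m, e ∈ Subgroup.setNormalizer S →
      e ∈ Subgroup.setNormalizer S_R := by
    intro e he
    exact mem_NSR_of_mem_NS e he
  constructor
  · ext e
    exact ⟨fun he => key2 e (key1 e he), fun he => key3 e he⟩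
  · ext e
    exact ⟨fun he => key1 e (key3 e he), fun he => key2 e he⟩
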